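/- Let p be a prime and n ≥ 1. Then there is no pair (i, k) of natural numbers with i ≥ 1, k < L(i), and p²·i + (p−1)·k = p^{n+2} − p. -/

import Mathlib

/-- The length `L(i) = p + p² + ⋯ + p^(ν_p(i)+1)` of the `v₁`-tower on `b_i`. -/
def L (p i : ℕ) : ℕ := ∑ t ∈ Finset.range (padicValNat p i + 1), p ^ (t + 1)

lemma geom_aux (p : ℕ) (hp : 1 ≤ p) :
    ∀ m : ℕ, (p - 1) * (∑ t ∈ Finset.range m, p ^ (t + 1)) + p = p ^ (m + 1) := by
  intro m
  induction m with
  | zero => simp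
  | succ m ih =>
    rw [Finset.sum_range_succ, Nat.mul_add]
    have hpow : p ^ (m + 1 + 1) = p * p ^ (m + 1) := by ring
    have h1 : (p - 1) * p ^ (m + 1) + p ^ (m + 1) = p * p ^ (m + 1) := by
      obtain ⟨q, rfl⟩ : ∃ q, p = q + 1 := ⟨p - 1, by omega⟩
      simp [Nat.add_mul]
    omega

/-- For a prime `p` and `n ≥ 1`, there is no pair `(i, k)` with `i ≥ 1`,
`k < L(i)` and `p² i + (p−1) k = p^(n+2) − p`. -/
theorem stmt8 (p n : ℕ) (hp : p.Prime) (hn : 1 ≤ n) :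
    ¬ ∃ i k : ℕ, 1 ≤ i ∧ k < L p i ∧
      p ^ 2 * i + (p - 1) * k = p ^ (n + 2) - p := by
  rintro ⟨i, k, hi, hk, heq⟩
  have hp1 : 1 < p := hp.one_lt
  set v := padicValNat p i with hv
  -- closed form for L
  have hL : (p - 1) * L p i + p = p ^ (v + 2) := by
    have := geom_aux p (le_of_lt hp1) (v + 1)
    simpa [L, hv] using this
  obtain ⟨m, hm⟩ : p ^ v ∣ i := pow_padicValNat_dvd
  have hm1 : 1 ≤ m := by
    rcases Nat.eq_zero_or_pos m with h | h
    · exfalso; rw [h, mul_zero] at hm; omega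
    · exact h
  have hple : p ≤ p ^ (n + 2) := by
    calc p = p ^ 1 := (pow_one p).symm
    _ ≤ p ^ (n + 2) := Nat.pow_le_pow_right (by omega) (by omega)
  have heq' : p ^ 2 * i + (p - 1) * k + p = p ^ (n + 2) := by omega
  -- p^2 * i = p^(v+2) * m
  have hi2 : p ^ 2 * i = p ^ (v + 2) * m := by
    rw [hm]; ring
  have hPpos : 0 < p ^ (v + 2) := Nat.pow_pos (by omega)
  -- v < n
  have hvn : v ≤ n := by
    have h1 : p ^ (v + 2) ≤ p ^ 2 * i := by
      rw [hi2]; exact Nat.le_mul_of_pos_right _ (by omega)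
    have h2 : p ^ (v + 2) < p ^ (n + 2) := by omega
    have := (Nat.pow_lt_pow_iff_right hp1).mp h2
    omega
  -- (p-1)*k + p < p^(v+2)
  have hr : (p - 1) * k + p < p ^ (v + 2) := by
    have h1 : (p - 1) * (k + 1) ≤ (p - 1) * L p i := Nat.mul_le_mul_left _ (by omega)
    have h2 : (p - 1) * (k + 1) = (p - 1) * k + (p - 1) := by ring
    omega
  set q := p ^ (n - v) with hq
  have hqeq : p ^ (n + 2) = p ^ (v + 2) * q := by
    rw [hq, ← pow_add]
    congr 1
    omega
  have heq2 : p ^ (v + 2) * m + ((p - 1) * k + p) = p ^ (v + 2) * q := by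
    omega
  have hmq : m < q := by
    by_contra h
    push_neg at h
    have : p ^ (v + 2) * q ≤ p ^ (v + 2) * m := Nat.mul_le_mul_left _ h
    omega
  have : p ^ (v + 2) * (m + 1) ≤ p ^ (v + 2) * q := Nat.mul_le_mul_left _ hmq
  rw [Nat.mul_add, mul_one] at this
  omega
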